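/- arXiv:2305.19277 — 3 statements merged into one kernel-verified Lean document; each statement's English description precedes it below -/
import Mathlib

section
/- Let G be a starlike graph with clique partition (V_0, V_1, …, V_t). Then for every i ∈ {0, 1, …, t}, the split graph G_i has a critical independent set T_i contained in Y_i. -/
open SimpleGraph

variable {V : Type*}

/-- The closed neighborhood of a vertex. -/
def closedNbhd (G : SimpleGraph V) (v : V) : Set V := insert v (G.neighborSet v)

/-- A vertex is simplicial if its closed neighborhood induces a complete graph. -/
def IsSimplicial (G : SimpleGraph V) (v : V) : Prop :=
  ∀ a ∈ closedNbhd G v, ∀ b ∈ closedNbhd G v, a ≠ b → G.Adj a b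

/-- `Z`, the set of simplicial vertices of `G`. -/
def simplicialSet (G : SimpleGraph V) : Set V := {v | IsSimplicial G v}

/-- `N(T)`, the union of open neighborhoods of vertices of `T`. -/
def nbhdSet (G : SimpleGraph V) (T : Set V) : Set V := ⋃ v ∈ T, G.neighborSet v

/-- An independent set of vertices. -/
def IsIndepSet' (G : SimpleGraph V) (T : Set V) : Prop :=
  ∀ u ∈ T, ∀ v ∈ T, ¬ G.Adj u v

/-- The difference `d(T) = |T| - |N(T)|` of a set of vertices. -/
noncomputable def indepDiff (G : SimpleGraph V) (T : Set V) : ℤ :=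
  (T.ncard : ℤ) - ((nbhdSet G T).ncard : ℤ)

/-- The critical independence difference `d_c(G)`. -/
noncomputable def critIndepDiff (G : SimpleGraph V) : ℤ :=
  sSup {d : ℤ | ∃ T : Set V, IsIndepSet' G T ∧ d = indepDiff G T}

/-- A walk is an induced path if it is a path and no two non-consecutive vertices
of it are adjacent. -/
def IsInducedPath (G : SimpleGraph V) {a b : V} (p : G.Walk a b) : Prop :=
  p.IsPath ∧ ∀ (i j : ℕ) (hi : i < p.support.length) (hj : j < p.support.length),
    i + 1 < j → ¬ G.Adj (p.support.get ⟨i, hi⟩) (p.support.get ⟨j, hj⟩)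

/-- A set is monophonically convex if it contains every vertex of every induced path
joining two of its vertices. -/
def MonoConvex (G : SimpleGraph V) (S : Set V) : Prop :=
  ∀ ⦃a b : V⦄, a ∈ S → b ∈ S → ∀ p : G.Walk a b, IsInducedPath G p →
    ∀ w ∈ p.support, w ∈ S

/-- The monophonic convex hull of `S`: the smallest monophonically convex set containing `S`. -/
def monoHull (G : SimpleGraph V) (S : Set V) : Set V :=
  ⋂₀ {T : Set V | S ⊆ T ∧ MonoConvex G T}

/-- A set is monophonically convexly independent if no member is in the hull
of the others. -/
def MConvexIndep (G : SimpleGraph V) (S : Set V) : Prop :=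
  ∀ v ∈ S, v ∉ monoHull G (S \ {v})

/-- The monophonic rank: the largest size of an m-convexly independent set. -/
noncomputable def monoRank (G : SimpleGraph V) : ℕ :=
  sSup {n : ℕ | ∃ S : Set V, MConvexIndep G S ∧ n = S.ncard}

/-- A starlike partition of a graph: a partition of the vertex set into cliques
`V_0, V_1, …, V_t` such that `V_0` is a maximal clique and, for `i ≥ 1`,
all vertices of `V_i` have the same closed neighborhood outside `V_i`,
contained in `V_0`. -/
structure IsStarlikePartition (G : SimpleGraph V) (t : ℕ) (Vp : Fin (t+1) → Set V) : Prop where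
  nonempty : ∀ i, (Vp i).Nonempty
  disjoint : ∀ i j, i ≠ j → Disjoint (Vp i) (Vp j)
  covers : ∀ v : V, ∃ i, v ∈ Vp i
  cliques : ∀ i, G.IsClique (Vp i)
  maximal : ∀ T : Set V, G.IsClique T → Vp 0 ⊆ T → T ⊆ Vp 0
  nbhd_eq : ∀ i : Fin (t+1), i ≠ 0 → ∀ u ∈ Vp i, ∀ v ∈ Vp i,
    closedNbhd G u \ Vp i = closedNbhd G v \ Vp i
  nbhd_sub : ∀ i : Fin (t+1), i ≠ 0 → ∀ u ∈ Vp i, closedNbhd G u \ Vp i ⊆ Vp 0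

/-- `X_i`: the maximal clique containing `V_i` (`X_0 = V_0`; for `i ≥ 1` it is
the closed neighborhood of any vertex of `V_i`). -/
def Xset (G : SimpleGraph V) {t : ℕ} (Vp : Fin (t+1) → Set V) (i : Fin (t+1)) : Set V :=
  if i = 0 then Vp 0 else ⋃ u ∈ Vp i, closedNbhd G u

/-- `C_i = X_i ∩ Z`. -/
def Cset (G : SimpleGraph V) {t : ℕ} (Vp : Fin (t+1) → Set V) (i : Fin (t+1)) : Set V :=
  Xset G Vp i ∩ simplicialSet G

/-- `C'_i = X_i − C_i`. -/
def Cset' (G : SimpleGraph V) {t : ℕ} (Vp : Fin (t+1) → Set V) (i : Fin (t+1)) : Set V :=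
  Xset G Vp i \ Cset G Vp i

/-- `Y_i`: the union of the sets `C_j`, over `j ≠ i` with `C'_j ⊆ C'_i`. -/
def Yset (G : SimpleGraph V) {t : ℕ} (Vp : Fin (t+1) → Set V) (i : Fin (t+1)) : Set V :=
  ⋃ j ∈ {j : Fin (t+1) | j ≠ i ∧ Cset' G Vp j ⊆ Cset' G Vp i}, Cset G Vp j

open scoped Classical in
/-- The vertex set of the split graph `G_i`: if `|N(Y_i) − Y_i| = |C'_i| − 1` and
`|Y_i| ≥ |C'_i| − 1` then `(C'_i − {x}) ∪ Y_i` where `{x} = C'_i − N(Y_i)`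
(so that `C'_i − {x} = C'_i ∩ N(Y_i)`), otherwise `C'_i ∪ Y_i`. -/
noncomputable def Wset (G : SimpleGraph V) {t : ℕ} (Vp : Fin (t+1) → Set V)
    (i : Fin (t+1)) : Set V :=
  if (((nbhdSet G (Yset G Vp i) \ Yset G Vp i).ncard : ℤ) = ((Cset' G Vp i).ncard : ℤ) - 1
      ∧ ((Yset G Vp i).ncard : ℤ) ≥ ((Cset' G Vp i).ncard : ℤ) - 1)
  then (Cset' G Vp i ∩ nbhdSet G (Yset G Vp i)) ∪ Yset G Vp i
  else Cset' G Vp i ∪ Yset G Vp i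

/-- The induced subgraph on `W` with all edges inside `Y` deleted. -/
def inducedMinusY (G : SimpleGraph V) (W Y : Set V) : SimpleGraph ↥W where
  Adj a b := G.Adj a b ∧ ¬((a : V) ∈ Y ∧ (b : V) ∈ Y)
  symm := by
    constructor
    intro a b h
    exact ⟨h.1.symm, fun hc => h.2 ⟨hc.2, hc.1⟩⟩
  loopless := by
    constructor
    intro a h
    exact G.ne_of_adj h.1 rfl

/-- The split graph `G_i = G[W_i] − E(G[Y_i])`. -/
noncomputable def Gsplit (G : SimpleGraph V) {t : ℕ} (Vp : Fin (t+1) → Set V)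
    (i : Fin (t+1)) : SimpleGraph ↥(Wset G Vp i) :=
  inducedMinusY G (Wset G Vp i) (Yset G Vp i)

section AuxLemmas
variable {G : SimpleGraph V} {t : ℕ} {Vp : Fin (t+1) → Set V}

lemma mem_closedNbhd_iff {u v : V} : u ∈ closedNbhd G v ↔ u = v ∨ G.Adj v u := by
  simp [closedNbhd]

lemma self_mem_closedNbhd (G : SimpleGraph V) (v : V) : v ∈ closedNbhd G v :=
  Set.mem_insert _ _

lemma simplicial_clique {y : V} (h : IsSimplicial G y) : G.IsClique (closedNbhd G y) :=
  fun _ ha _ hb hab => h _ ha _ hb hab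

lemma clique_subset_closedNbhd {S : Set V} (h : G.IsClique S) {y : V} (hy : y ∈ S) :
    S ⊆ closedNbhd G y := by
  intro x hx
  rcases eq_or_ne x y with rfl | hne
  · exact self_mem_closedNbhd G x
  · exact mem_closedNbhd_iff.2 (Or.inr (h hy hx (fun h' => hne h'.symm)))

lemma closedNbhd_eq_of_mem (hstar : IsStarlikePartition G t Vp) {j : Fin (t+1)}
    (hj : j ≠ 0) {u v : V} (hu : u ∈ Vp j) (hv : v ∈ Vp j) :
    closedNbhd G u = closedNbhd G v := by
  have key : ∀ a b : V, a ∈ Vp j → b ∈ Vp j → closedNbhd G a ⊆ closedNbhd G b := by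
    intro a b ha hb x hx
    by_cases hxV : x ∈ Vp j
    · exact clique_subset_closedNbhd (hstar.cliques j) hb hxV
    · have hmem : x ∈ closedNbhd G b \ Vp j := by
        rw [← hstar.nbhd_eq j hj a ha b hb]
        exact ⟨hx, hxV⟩
      exact hmem.1
  exact Set.Subset.antisymm (key u v hu hv) (key v u hv hu)

lemma Xset_eq (hstar : IsStarlikePartition G t Vp) {j : Fin (t+1)} (hj : j ≠ 0)
    {u : V} (hu : u ∈ Vp j) : Xset G Vp j = closedNbhd G u := by
  rw [Xset, if_neg hj]
  apply Set.Subset.antisymm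
  · exact Set.iUnion₂_subset fun v hv => (closedNbhd_eq_of_mem hstar hj hv hu).le
  · exact Set.subset_biUnion_of_mem hu

lemma Vp_subset_Xset (hstar : IsStarlikePartition G t Vp) (j : Fin (t+1)) :
    Vp j ⊆ Xset G Vp j := by
  by_cases hj : j = 0
  · subst hj; rw [Xset, if_pos rfl]
  · intro u hu; rw [Xset_eq hstar hj hu]; exact self_mem_closedNbhd G u

lemma Xset_clique (hstar : IsStarlikePartition G t Vp) (j : Fin (t+1)) :
    G.IsClique (Xset G Vp j) := by
  by_cases hj : j = 0
  · subst hj; rw [Xset, if_pos rfl]; exact hstar.cliques 0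
  · obtain ⟨u0, hu0⟩ := hstar.nonempty j
    rw [Xset_eq hstar hj hu0]
    intro a ha b hb hab
    by_cases haV : a ∈ Vp j <;> by_cases hbV : b ∈ Vp j
    · exact hstar.cliques j haV hbV hab
    · have hb' : b ∈ closedNbhd G a := by
        have : b ∈ closedNbhd G a \ Vp j := by
          rw [hstar.nbhd_eq j hj a haV u0 hu0]; exact ⟨hb, hbV⟩
        exact this.1
      rcases mem_closedNbhd_iff.1 hb' with rfl | h
      · exact absurd rfl hab
      · exact h
    · have ha' : a ∈ closedNbhd G b := by
        have : a ∈ closedNbhd G b \ Vp j := by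
          rw [hstar.nbhd_eq j hj b hbV u0 hu0]; exact ⟨ha, haV⟩
        exact this.1
      rcases mem_closedNbhd_iff.1 ha' with rfl | h
      · exact absurd rfl hab
      · exact h.symm
    · have ha0 : a ∈ Vp 0 := hstar.nbhd_sub j hj u0 hu0 ⟨ha, haV⟩
      have hb0 : b ∈ Vp 0 := hstar.nbhd_sub j hj u0 hu0 ⟨hb, hbV⟩
      exact hstar.cliques 0 ha0 hb0 hab

lemma Xset_maximal (hstar : IsStarlikePartition G t Vp) (j : Fin (t+1)) {T : Set V}
    (hT : G.IsClique T) (hsub : Xset G Vp j ⊆ T) : T ⊆ Xset G Vp j := by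
  by_cases hj : j = 0
  · subst hj; rw [Xset, if_pos rfl] at *
    exact hstar.maximal T hT hsub
  · obtain ⟨u0, hu0⟩ := hstar.nonempty j
    rw [Xset_eq hstar hj hu0] at *
    intro x hx
    have hu0T : u0 ∈ T := hsub (self_mem_closedNbhd G u0)
    rcases eq_or_ne x u0 with rfl | hne
    · exact self_mem_closedNbhd G x
    · exact mem_closedNbhd_iff.2 (Or.inr (hT hu0T hx (fun h => hne h.symm)))

lemma closedNbhd_eq_Xset_of_mem_Cset (hstar : IsStarlikePartition G t Vp)
    {j : Fin (t+1)} {y : V} (hy : y ∈ Cset G Vp j) :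
    closedNbhd G y = Xset G Vp j := by
  have h1 : Xset G Vp j ⊆ closedNbhd G y :=
    clique_subset_closedNbhd (Xset_clique hstar j) hy.1
  exact Set.Subset.antisymm (Xset_maximal hstar j (simplicial_clique hy.2) h1) h1

end AuxLemmas
/-- Lemma 2: for every `i`, the split graph `G_i` has a critical
independent set contained in `Y_i`. -/
theorem statement2 [Fintype V] (G : SimpleGraph V) (t : ℕ) (Vp : Fin (t+1) → Set V)
    (hstar : IsStarlikePartition G t Vp) (i : Fin (t+1)) :
    ∃ T : Set ↥(Wset G Vp i),
      IsIndepSet' (Gsplit G Vp i) T ∧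
      indepDiff (Gsplit G Vp i) T = critIndepDiff (Gsplit G Vp i) ∧
      Subtype.val '' T ⊆ Yset G Vp i := by
  classical
  -- Basic facts about Y, C'
  have hYZ : Yset G Vp i ⊆ simplicialSet G := by
    intro y hy
    simp only [Yset, Set.mem_iUnion] at hy
    obtain ⟨j, _, hyj⟩ := hy
    exact hyj.2
  have hC'Z : ∀ x ∈ Cset' G Vp i, x ∉ simplicialSet G := by
    rintro x ⟨hx1, hx2⟩ hz
    exact hx2 ⟨hx1, hz⟩
  have hYC' : ∀ y ∈ Yset G Vp i, y ∉ Cset' G Vp i := fun y hy hc => hC'Z y hc (hYZ hy)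
  have hM : nbhdSet G (Yset G Vp i) \ Yset G Vp i ⊆ Cset' G Vp i := by
    rintro x ⟨hxN, hxY⟩
    simp only [nbhdSet, Set.mem_iUnion] at hxN
    obtain ⟨y, hyY, hxy⟩ := hxN
    have hy' := hyY
    simp only [Yset, Set.mem_iUnion] at hy'
    obtain ⟨j, hjmem, hyCj⟩ := hy'
    have hXj : x ∈ Xset G Vp j := by
      rw [← closedNbhd_eq_Xset_of_mem_Cset hstar hyCj]
      exact Set.mem_insert_of_mem _ hxy
    have hxC : x ∉ Cset G Vp j := fun hxC => hxY (Set.mem_biUnion hjmem hxC)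
    exact hjmem.2 ⟨hXj, hxC⟩
  have hC'clique : G.IsClique (Cset' G Vp i) :=
    (Xset_clique hstar i).subset (fun x hx => hx.1)
  have hYW : Yset G Vp i ⊆ Wset G Vp i := by
    unfold Wset; split_ifs <;> exact Set.subset_union_right
  have hWYC' : Wset G Vp i \ Yset G Vp i ⊆ Cset' G Vp i := by
    unfold Wset; split_ifs with h
    · rintro x ⟨hx, hxY⟩
      rcases hx with h1 | h2
      · exact h1.1
      · exact absurd h2 hxY
    · rintro x ⟨hx, hxY⟩
      rcases hx with h1 | h2
      · exact h1
      · exact absurd h2 hxY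
  have hcaseA : ∀ hc : (((nbhdSet G (Yset G Vp i) \ Yset G Vp i).ncard : ℤ)
        = ((Cset' G Vp i).ncard : ℤ) - 1
      ∧ ((Yset G Vp i).ncard : ℤ) ≥ ((Cset' G Vp i).ncard : ℤ) - 1),
      Wset G Vp i \ Yset G Vp i ⊆ nbhdSet G (Yset G Vp i) := by
    intro hc
    have hWeq : Wset G Vp i
        = (Cset' G Vp i ∩ nbhdSet G (Yset G Vp i)) ∪ Yset G Vp i := by
      unfold Wset; rw [if_pos hc]
    rw [hWeq]
    rintro x ⟨hx, hxY⟩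
    rcases hx with h1 | h2
    · exact h1.2
    · exact absurd h2 hxY
  have hWB : ∀ _hc : ¬ ((((nbhdSet G (Yset G Vp i) \ Yset G Vp i).ncard : ℤ)
        = ((Cset' G Vp i).ncard : ℤ) - 1)
      ∧ ((Yset G Vp i).ncard : ℤ) ≥ ((Cset' G Vp i).ncard : ℤ) - 1),
      Wset G Vp i = Cset' G Vp i ∪ Yset G Vp i := by
    intro hc
    unfold Wset; rw [if_neg hc]
  -- Subtype setup
  set H : SimpleGraph ↥(Wset G Vp i) := Gsplit G Vp i with hHdef
  have hAdj : ∀ a b : ↥(Wset G Vp i),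
      H.Adj a b ↔ (G.Adj ↑a ↑b ∧ ¬((a : V) ∈ Yset G Vp i ∧ (b : V) ∈ Yset G Vp i)) :=
    fun _ _ => Iff.rfl
  set Yw : Set ↥(Wset G Vp i) := {w | (w : V) ∈ Yset G Vp i} with hYwdef
  have hmemN : ∀ (S : Set ↥(Wset G Vp i)) (x : ↥(Wset G Vp i)),
      x ∈ nbhdSet H S ↔ ∃ v ∈ S, H.Adj v x := by
    intro S x
    simp [nbhdSet, SimpleGraph.mem_neighborSet]
  have hindepY : ∀ S ⊆ Yw, IsIndepSet' H S := by
    intro S hS u hu v hv hadj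
    exact ((hAdj u v).1 hadj).2 ⟨hS hu, hS hv⟩
  have hNmono : ∀ S T : Set ↥(Wset G Vp i), S ⊆ T → nbhdSet H S ⊆ nbhdSet H T := by
    intro S T h x hx
    obtain ⟨v, hv, hadj⟩ := (hmemN S x).1 hx
    exact (hmemN T x).2 ⟨v, h hv, hadj⟩
  have hNS_notY : ∀ S ⊆ Yw, ∀ x ∈ nbhdSet H S,
      (x : V) ∉ Yset G Vp i ∧ (x : V) ∈ nbhdSet G (Yset G Vp i) := by
    intro S hS x hx
    obtain ⟨v, hv, hadj⟩ := (hmemN S x).1 hx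
    have h := (hAdj v x).1 hadj
    have hvY : (v : V) ∈ Yset G Vp i := hS hv
    refine ⟨fun hxY => h.2 ⟨hvY, hxY⟩, ?_⟩
    simp only [nbhdSet, Set.mem_iUnion]
    exact ⟨↑v, hvY, h.1⟩
  -- maximizer over subsets of Yw
  obtain ⟨S0, hS0mem, hS0max⟩ := Set.exists_max_image {S : Set ↥(Wset G Vp i) | S ⊆ Yw}
    (indepDiff H) (Set.toFinite _) ⟨∅, Set.empty_subset _⟩
  have hS0Y : S0 ⊆ Yw := hS0mem
  have hd0 : indepDiff H (∅ : Set ↥(Wset G Vp i)) = 0 := by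
    simp [indepDiff, nbhdSet]
  have h0 : (0 : ℤ) ≤ indepDiff H S0 := hd0 ▸ hS0max ∅ (Set.empty_subset _)
  -- the key claim
  have key : ∀ T : Set ↥(Wset G Vp i), IsIndepSet' H T → indepDiff H T ≤ indepDiff H S0 := by
    intro T hT
    by_cases hTY : T ⊆ Yw
    · exact hS0max T hTY
    have hTY' : ∃ u ∈ T, u ∉ Yw := by
      by_contra h
      push_neg at h
      exact hTY h
    obtain ⟨u, huT, huY⟩ := hTY'
    have huY' : (u : V) ∉ Yset G Vp i := huY
    set S : Set ↥(Wset G Vp i) := T ∩ Yw with hSdef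
    have hSY : S ⊆ Yw := Set.inter_subset_right
    have huC' : (u : V) ∈ Cset' G Vp i := hWYC' ⟨u.2, huY'⟩
    have hTeq : T = insert u S := by
      apply Set.Subset.antisymm
      · intro v hv
        by_cases hvY : v ∈ Yw
        · exact Set.mem_insert_of_mem _ ⟨hv, hvY⟩
        · rcases eq_or_ne v u with rfl | hne
          · exact Set.mem_insert _ _
          · exfalso
            have hvC' : (v : V) ∈ Cset' G Vp i := hWYC' ⟨v.2, hvY⟩
            have hvalne : (u : V) ≠ (v : V) := fun h => hne (Subtype.ext h).symm
            exact hT u huT v hv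
              ((hAdj u v).2 ⟨hC'clique huC' hvC' hvalne, fun hc => huY' hc.1⟩)
      · intro v hv
        rcases Set.mem_insert_iff.1 hv with rfl | h
        · exact huT
        · exact h.1
    have huS : u ∉ S := fun h => huY h.2
    have hcardT : T.ncard = S.ncard + 1 := by
      rw [hTeq]; exact Set.ncard_insert_of_notMem huS (Set.toFinite _)
    have hNsub : nbhdSet H S ⊆ nbhdSet H T := hNmono S T Set.inter_subset_left
    have hdS : indepDiff H S ≤ indepDiff H S0 := hS0max S hSY
    by_cases hy : ∃ y : ↥(Wset G Vp i), (y : V) ∈ Yset G Vp i ∧ H.Adj u y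
    · obtain ⟨y, hyY, hadjuy⟩ := hy
      have hyNT : y ∈ nbhdSet H T := (hmemN T y).2 ⟨u, huT, hadjuy⟩
      have hyNS : y ∉ nbhdSet H S := fun h => (hNS_notY S hSY y h).1 hyY
      have hins : insert y (nbhdSet H S) ⊆ nbhdSet H T := Set.insert_subset hyNT hNsub
      have hcard : (nbhdSet H S).ncard + 1 ≤ (nbhdSet H T).ncard := by
        have h1 := Set.ncard_le_ncard hins (Set.toFinite _)
        rwa [Set.ncard_insert_of_notMem hyNS (Set.toFinite _)] at h1
      simp only [indepDiff] at hdS ⊢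
      omega
    · push_neg at hy
      -- u has no Y-neighbour in H; hence not in N_G(Y)
      have huNGY : (u : V) ∉ nbhdSet G (Yset G Vp i) := by
        intro h
        simp only [nbhdSet, Set.mem_iUnion] at h
        obtain ⟨y, hyY, hadjG⟩ := h
        have hyW : y ∈ Wset G Vp i := hYW hyY
        exact hy ⟨y, hyW⟩ hyY
          ((hAdj u ⟨y, hyW⟩).2 ⟨hadjG.symm, fun hc2 => huY' hc2.1⟩)
      have hcond : ¬ ((((nbhdSet G (Yset G Vp i) \ Yset G Vp i).ncard : ℤ)
            = ((Cset' G Vp i).ncard : ℤ) - 1)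
          ∧ ((Yset G Vp i).ncard : ℤ) ≥ ((Cset' G Vp i).ncard : ℤ) - 1) := by
        intro hc
        exact huNGY (hcaseA hc ⟨u.2, huY'⟩)
      have hWeq := hWB hcond
      set Kw : Set ↥(Wset G Vp i) := {w | (w : V) ∉ Yset G Vp i} with hKwdef
      have hKval : Subtype.val '' Kw = Cset' G Vp i := by
        apply Set.Subset.antisymm
        · rintro x ⟨w, hw, rfl⟩
          have hwW : (w : V) ∈ Cset' G Vp i ∪ Yset G Vp i := hWeq ▸ w.2
          rcases hwW with h1 | h2
          · exact h1
          · exact absurd h2 hw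
        · intro x hx
          have hxW : x ∈ Wset G Vp i := hWeq ▸ Or.inl hx
          exact ⟨⟨x, hxW⟩, fun hxY => hYC' x hxY hx, rfl⟩
      have huK : u ∈ Kw := huY'
      -- Kw \ {u} ⊆ N_H(T)
      have hKNT : Kw \ {u} ⊆ nbhdSet H T := by
        rintro w ⟨hwK, hwu⟩
        have hwu' : w ≠ u := hwu
        have hwC' : (w : V) ∈ Cset' G Vp i := hWYC' ⟨w.2, hwK⟩
        have hvalne : (u : V) ≠ (w : V) := fun h => hwu' (Subtype.ext h.symm)
        exact (hmemN T w).2 ⟨u, huT,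
          (hAdj u w).2 ⟨hC'clique huC' hwC' hvalne, fun hc => huY' hc.1⟩⟩
      by_cases hN : (nbhdSet H S).ncard + 1 ≤ (nbhdSet H T).ncard
      · simp only [indepDiff] at hdS ⊢
        omega
      · have hNle : (nbhdSet H T).ncard ≤ (nbhdSet H S).ncard := by omega
        have hNeq : nbhdSet H S = nbhdSet H T :=
          Set.eq_of_subset_of_ncard_le hNsub hNle (Set.toFinite _)
        have hKsubNS : Kw \ {u} ⊆ nbhdSet H S := hNeq ▸ hKNT
        have huNS : u ∉ nbhdSet H S := by
          intro h
          obtain ⟨v, hv, hadj⟩ := (hmemN S u).1 h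
          exact hy v (hSY hv) hadj.symm
        have hNSsubK : nbhdSet H S ⊆ Kw \ {u} := by
          intro x hx
          refine ⟨(hNS_notY S hSY x hx).1, fun hxu => ?_⟩
          have : x = u := hxu
          exact huNS (this ▸ hx)
        have hNSeqK : nbhdSet H S = Kw \ {u} := Set.Subset.antisymm hNSsubK hKsubNS
        have hKcard : Kw.ncard = (Cset' G Vp i).ncard := by
          rw [← hKval, Set.ncard_image_of_injective _ Subtype.val_injective]
        have hNScard : (nbhdSet H S).ncard = Kw.ncard - 1 := by
          rw [hNSeqK]
          exact Set.ncard_diff_singleton_of_mem huK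
        have hKpos : 1 ≤ Kw.ncard :=
          (Set.ncard_pos (Set.toFinite _)).2 ⟨u, huK⟩
        -- bounds on M := N_G(Y) \ Y
        have hMsub : nbhdSet G (Yset G Vp i) \ Yset G Vp i ⊆ Cset' G Vp i \ {(u : V)} := by
          intro x hx
          refine ⟨hM hx, fun h => ?_⟩
          have : x = (u : V) := h
          exact huNGY (this ▸ hx.1)
        have hNSM : Subtype.val '' nbhdSet H S ⊆ nbhdSet G (Yset G Vp i) \ Yset G Vp i := by
          rintro x ⟨w, hw, rfl⟩
          exact ⟨(hNS_notY S hSY w hw).2, (hNS_notY S hSY w hw).1⟩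
        have hMge : (Cset' G Vp i).ncard - 1 ≤ (nbhdSet G (Yset G Vp i) \ Yset G Vp i).ncard := by
          have h1 : (Subtype.val '' nbhdSet H S).ncard = (nbhdSet H S).ncard :=
            Set.ncard_image_of_injective _ Subtype.val_injective
          have h2 := Set.ncard_le_ncard hNSM (Set.toFinite _)
          omega
        have hMle : (nbhdSet G (Yset G Vp i) \ Yset G Vp i).ncard ≤ (Cset' G Vp i).ncard - 1 := by
          have h1 := Set.ncard_le_ncard hMsub (Set.toFinite _)
          rwa [Set.ncard_diff_singleton_of_mem huC'] at h1
        have hYsmall : ¬ (((Yset G Vp i).ncard : ℤ) ≥ ((Cset' G Vp i).ncard : ℤ) - 1) := by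
          intro hb
          apply hcond
          refine ⟨?_, hb⟩
          have : (Cset' G Vp i).ncard = Kw.ncard := hKcard.symm
          omega
        have hYwval : Subtype.val '' Yw = Yset G Vp i := by
          apply Set.Subset.antisymm
          · rintro x ⟨w, hw, rfl⟩; exact hw
          · intro y hyY; exact ⟨⟨y, hYW hyY⟩, hyY, rfl⟩
        have hYwcard : Yw.ncard = (Yset G Vp i).ncard := by
          rw [← hYwval, Set.ncard_image_of_injective _ Subtype.val_injective]
        have hScard : S.ncard ≤ Yw.ncard := Set.ncard_le_ncard hSY (Set.toFinite _)
        refine le_trans ?_ h0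
        have hNT : (nbhdSet H T).ncard = (Cset' G Vp i).ncard - 1 := by
          rw [← hNeq, hNScard, hKcard]
        have hC1 : 1 ≤ (Cset' G Vp i).ncard := hKcard ▸ hKpos
        simp only [indepDiff]
        push_neg at hYsmall
        omega
  refine ⟨S0, hindepY S0 hS0Y, ?_, ?_⟩
  · have hgr : IsGreatest {d : ℤ | ∃ T : Set ↥(Wset G Vp i),
        IsIndepSet' H T ∧ d = indepDiff H T} (indepDiff H S0) :=
      ⟨⟨S0, hindepY S0 hS0Y, rfl⟩, by rintro d ⟨T, hT, rfl⟩; exact key T hT⟩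
    exact hgr.csSup_eq.symm
  · rintro x ⟨w, hw, rfl⟩
    exact hS0Y hw
end

section
/- Let G be a starlike graph with clique partition (V_0, V_1, …, V_t), let i ∈ {0, 1, …, t}, and let T_i be a critical independent set of G_i contained in Y_i. Then the set S_i = (C'_i − N(T_i)) ∪ T_i ∪ C_i is an m-convexly independent set of G and |S_i| = |X_i| + d_c(G_i). Consequently r(G) ≥ |X_i| + d_c(G_i). -/
open SimpleGraph

variable {V : Type*}

/-! ### Auxiliary lemmas for the proof of `statement4`. -/

namespace StarlikeAux

variable {G : SimpleGraph V} {t : ℕ} {Vp : Fin (t+1) → Set V}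

lemma mem_closedNbhd {u v : V} : u ∈ closedNbhd G v ↔ u = v ∨ G.Adj v u := by
  simp [closedNbhd]

lemma mem_closedNbhd_of_adj {u v : V} (h : G.Adj v u) : u ∈ closedNbhd G v :=
  mem_closedNbhd.2 (Or.inr h)

lemma self_mem_closedNbhd (v : V) : v ∈ closedNbhd G v := mem_closedNbhd.2 (Or.inl rfl)

lemma not_simplicial_cherry {x u v : V} (hxu : G.Adj x u) (hxv : G.Adj x v)
    (huv : ¬ G.Adj u v) (hne : u ≠ v) : ¬ IsSimplicial G x :=
  fun h => huv (h u (mem_closedNbhd_of_adj hxu) v (mem_closedNbhd_of_adj hxv) hne)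

lemma mem_nbhdSet {T : Set V} {x : V} : x ∈ nbhdSet G T ↔ ∃ u ∈ T, G.Adj u x := by
  simp [nbhdSet]

/-! #### Walk support indexing via `getVert` -/

lemma support_get_eq_getVert {a b : V} (p : G.Walk a b) (k : ℕ)
    (hk : k < p.support.length) : p.support.get ⟨k, hk⟩ = p.getVert k := by
  induction p generalizing k with
  | nil =>
    have hk1 : k < 1 := by simpa using hk
    have : k = 0 := by omega
    subst this; rfl
  | cons h q ih =>
    cases k with
    | zero => rfl
    | succ n =>
      have hn : n < q.support.length := by
        simpa [SimpleGraph.Walk.support_cons] using hk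
      simpa [SimpleGraph.Walk.support_cons, SimpleGraph.Walk.getVert_cons_succ] using ih n hn

lemma ip_nonadj {a b : V} {p : G.Walk a b} (hp : IsInducedPath G p) (k l : ℕ)
    (hkl : k + 1 < l) (hl : l ≤ p.length) :
    ¬ G.Adj (p.getVert k) (p.getVert l) := by
  have hk' : k < p.support.length := by rw [SimpleGraph.Walk.length_support]; omega
  have hl' : l < p.support.length := by rw [SimpleGraph.Walk.length_support]; omega
  have h := hp.2 k l hk' hl' hkl
  rwa [support_get_eq_getVert p k hk', support_get_eq_getVert p l hl'] at h

lemma ip_ne {a b : V} {p : G.Walk a b} (hp : IsInducedPath G p) (k l : ℕ)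
    (hkl : k ≠ l) (hk : k ≤ p.length) (hl : l ≤ p.length) :
    p.getVert k ≠ p.getVert l := by
  have hk' : k < p.support.length := by rw [SimpleGraph.Walk.length_support]; omega
  have hl' : l < p.support.length := by rw [SimpleGraph.Walk.length_support]; omega
  intro he
  rw [← support_get_eq_getVert p k hk', ← support_get_eq_getVert p l hl'] at he
  have := (List.Nodup.get_inj_iff hp.1.support_nodup).1 he
  exact hkl (by simpa using this)

/-! #### Structure of starlike graphs -/

lemma interior_mem_V0 (hstar : IsStarlikePartition G t Vp) {w x y : V}
    (hxw : G.Adj x w) (hwy : G.Adj w y) (hxy : ¬ G.Adj x y) (hne : x ≠ y) :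
    w ∈ Vp 0 := by
  obtain ⟨m, hm⟩ := hstar.covers w
  by_cases h0 : m = 0
  · subst h0; exact hm
  exfalso
  by_cases hxm : x ∈ Vp m
  · by_cases hym : y ∈ Vp m
    · exact hxy (hstar.cliques m hxm hym hne)
    · have hy : y ∈ closedNbhd G w \ Vp m := ⟨mem_closedNbhd_of_adj hwy, hym⟩
      rw [hstar.nbhd_eq m h0 w hm x hxm] at hy
      rcases mem_closedNbhd.1 hy.1 with h | h
      · exact hne h.symm
      · exact hxy h
  · by_cases hym : y ∈ Vp m
    · have hx : x ∈ closedNbhd G w \ Vp m := ⟨mem_closedNbhd_of_adj hxw.symm, hxm⟩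
      rw [hstar.nbhd_eq m h0 w hm y hym] at hx
      rcases mem_closedNbhd.1 hx.1 with h | h
      · exact hne h
      · exact hxy h.symm
    · have hx0 : x ∈ Vp 0 :=
        hstar.nbhd_sub m h0 w hm ⟨mem_closedNbhd_of_adj hxw.symm, hxm⟩
      have hy0 : y ∈ Vp 0 :=
        hstar.nbhd_sub m h0 w hm ⟨mem_closedNbhd_of_adj hwy, hym⟩
      exact hxy (hstar.cliques 0 hx0 hy0 hne)

lemma Xset_eq_closedNbhd (hstar : IsStarlikePartition G t Vp) {m : Fin (t+1)}
    (hm : m ≠ 0) {u0 : V} (hu0 : u0 ∈ Vp m) : Xset G Vp m = closedNbhd G u0 := by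
  ext w
  simp only [Xset, if_neg hm, Set.mem_iUnion]
  constructor
  · rintro ⟨u, hu, hw⟩
    by_cases hwm : w ∈ Vp m
    · by_cases hwu : w = u0
      · subst hwu; exact self_mem_closedNbhd w
      · exact mem_closedNbhd_of_adj (hstar.cliques m hu0 hwm (Ne.symm hwu))
    · have hw' : w ∈ closedNbhd G u \ Vp m := ⟨hw, hwm⟩
      rw [hstar.nbhd_eq m hm u hu u0 hu0] at hw'
      exact hw'.1
  · exact fun h => ⟨u0, hu0, h⟩

lemma Vp_subset_Xset (m : Fin (t+1)) : Vp m ⊆ Xset G Vp m := by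
  by_cases h0 : m = 0
  · subst h0; intro u hu; simpa [Xset] using hu
  · intro u hu
    simp only [Xset, if_neg h0, Set.mem_iUnion]
    exact ⟨u, hu, self_mem_closedNbhd u⟩

lemma Xset_isClique (hstar : IsStarlikePartition G t Vp) (m : Fin (t+1)) :
    G.IsClique (Xset G Vp m) := by
  by_cases h0 : m = 0
  · subst h0
    have : Xset G Vp 0 = Vp 0 := by simp [Xset]
    rw [this]; exact hstar.cliques 0
  obtain ⟨u0, hu0⟩ := hstar.nonempty m
  rw [Xset_eq_closedNbhd hstar h0 hu0]
  intro x hx y hy hne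
  rcases mem_closedNbhd.1 hx with rfl | hx'
  · rcases mem_closedNbhd.1 hy with rfl | hy'
    · exact absurd rfl hne
    · exact hy'
  · rcases mem_closedNbhd.1 hy with rfl | hy'
    · exact hx'.symm
    · by_cases hxm : x ∈ Vp m
      · by_cases hym : y ∈ Vp m
        · exact hstar.cliques m hxm hym hne
        · have hy2 : y ∈ closedNbhd G u0 \ Vp m := ⟨mem_closedNbhd_of_adj hy', hym⟩
          rw [hstar.nbhd_eq m h0 u0 hu0 x hxm] at hy2
          rcases mem_closedNbhd.1 hy2.1 with h | h
          · exact absurd h.symm hne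
          · exact h
      · by_cases hym : y ∈ Vp m
        · have hx2 : x ∈ closedNbhd G u0 \ Vp m := ⟨mem_closedNbhd_of_adj hx', hxm⟩
          rw [hstar.nbhd_eq m h0 u0 hu0 y hym] at hx2
          rcases mem_closedNbhd.1 hx2.1 with h | h
          · exact absurd h hne
          · exact h.symm
        · have hx0 : x ∈ Vp 0 :=
            hstar.nbhd_sub m h0 u0 hu0 ⟨mem_closedNbhd_of_adj hx', hxm⟩
          have hy0 : y ∈ Vp 0 :=
            hstar.nbhd_sub m h0 u0 hu0 ⟨mem_closedNbhd_of_adj hy', hym⟩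
          exact hstar.cliques 0 hx0 hy0 hne

lemma Xset_maximal (hstar : IsStarlikePartition G t Vp) (m : Fin (t+1)) {Q : Set V}
    (hQ : G.IsClique Q) (hsub : Xset G Vp m ⊆ Q) : Q ⊆ Xset G Vp m := by
  by_cases h0 : m = 0
  · subst h0
    have hX : Xset G Vp 0 = Vp 0 := by simp [Xset]
    rw [hX] at hsub ⊢
    exact hstar.maximal Q hQ hsub
  obtain ⟨u0, hu0⟩ := hstar.nonempty m
  rw [Xset_eq_closedNbhd hstar h0 hu0] at hsub ⊢
  intro q hq
  by_cases hqu : q = u0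
  · subst hqu; exact self_mem_closedNbhd q
  · exact mem_closedNbhd_of_adj (hQ (hsub (self_mem_closedNbhd u0)) hq (Ne.symm hqu))

lemma closedNbhd_eq_Xset (hstar : IsStarlikePartition G t Vp) {m : Fin (t+1)} {a : V}
    (ha : a ∈ Cset G Vp m) : closedNbhd G a = Xset G Vp m := by
  obtain ⟨haX, haZ⟩ := ha
  have haS : IsSimplicial G a := haZ
  have h1 : Xset G Vp m ⊆ closedNbhd G a := by
    intro w hw
    by_cases hwa : w = a
    · subst hwa; exact self_mem_closedNbhd w
    · exact mem_closedNbhd_of_adj (Xset_isClique hstar m haX hw (fun h => hwa h.symm))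
  have h2 : G.IsClique (closedNbhd G a) := fun x hx y hy hne => haS x hx y hy hne
  exact Set.Subset.antisymm (Xset_maximal hstar m h2 h1) h1

lemma Vp_simplicial (hstar : IsStarlikePartition G t Vp) {m : Fin (t+1)} (hm : m ≠ 0) :
    Vp m ⊆ simplicialSet G := by
  intro w hw
  have hX : closedNbhd G w ⊆ Xset G Vp m := by
    intro z hz
    simp only [Xset, if_neg hm, Set.mem_iUnion]
    exact ⟨w, hw, hz⟩
  exact fun x hx y hy hne => Xset_isClique hstar m (hX hx) (hX hy) hne

lemma Cset'_subset_V0 (hstar : IsStarlikePartition G t Vp) (m : Fin (t+1)) :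
    Cset' G Vp m ⊆ Vp 0 := by
  intro w hw
  obtain ⟨hwX, hwC⟩ := hw
  have hwZ : w ∉ simplicialSet G := fun h => hwC ⟨hwX, h⟩
  by_cases h0 : m = 0
  · subst h0; simpa [Xset] using hwX
  · have hwm : w ∉ Vp m := fun h => hwZ (Vp_simplicial hstar h0 h)
    obtain ⟨u0, hu0⟩ := hstar.nonempty m
    rw [Xset_eq_closedNbhd hstar h0 hu0] at hwX
    exact hstar.nbhd_sub m h0 u0 hu0 ⟨hwX, hwm⟩

lemma Xset_ne (hstar : IsStarlikePartition G t Vp) {i j : Fin (t+1)} (hij : i ≠ j) :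
    Xset G Vp i ≠ Xset G Vp j := by
  have aux : ∀ i j : Fin (t+1), i ≠ j → j ≠ 0 → Xset G Vp i ≠ Xset G Vp j := by
    intro i j hij hj0 heq
    obtain ⟨u0, hu0⟩ := hstar.nonempty j
    have huX : u0 ∈ Xset G Vp i := heq ▸ Vp_subset_Xset j hu0
    have hu0i : u0 ∉ Vp i := fun h =>
      Set.disjoint_left.1 (hstar.disjoint j i (Ne.symm hij)) hu0 h
    have hu00 : u0 ∈ Vp 0 := by
      by_cases hi0 : i = 0
      · subst hi0; simpa [Xset] using huX
      · obtain ⟨u1, hu1⟩ := hstar.nonempty i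
        rw [Xset_eq_closedNbhd hstar hi0 hu1] at huX
        exact hstar.nbhd_sub i hi0 u1 hu1 ⟨huX, hu0i⟩
    exact Set.disjoint_left.1 (hstar.disjoint j 0 hj0) hu0 hu00
  by_cases hj0 : j = 0
  · subst hj0
    intro h
    exact aux 0 i (Ne.symm hij) hij h.symm
  · exact aux i j hij hj0

lemma mem_Cset'_of_adj (hstar : IsStarlikePartition G t Vp) {m : Fin (t+1)} {a x : V}
    (ha : a ∈ Cset G Vp m) (hax : G.Adj a x) (hxZ : ¬ IsSimplicial G x) :
    x ∈ Cset' G Vp m := by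
  have hx : x ∈ Xset G Vp m := by
    rw [← closedNbhd_eq_Xset hstar ha]
    exact mem_closedNbhd_of_adj hax
  exact ⟨hx, fun hc => hxZ hc.2⟩

lemma mem_Yset_iff {i : Fin (t+1)} {w : V} :
    w ∈ Yset G Vp i ↔ ∃ m, (m ≠ i ∧ Cset' G Vp m ⊆ Cset' G Vp i) ∧ w ∈ Cset G Vp m := by
  simp [Yset]

lemma Yset_subset_simplicial {i : Fin (t+1)} : Yset G Vp i ⊆ simplicialSet G := by
  intro w hw
  obtain ⟨m, _, hwm⟩ := mem_Yset_iff.1 hw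
  exact hwm.2

lemma Cset_disjoint_Yset (hstar : IsStarlikePartition G t Vp) (i : Fin (t+1)) :
    ∀ w ∈ Cset G Vp i, w ∉ Yset G Vp i := by
  intro w hwi hwY
  obtain ⟨m, ⟨hmi, _⟩, hwm⟩ := mem_Yset_iff.1 hwY
  have h1 := closedNbhd_eq_Xset hstar hwi
  have h2 := closedNbhd_eq_Xset hstar hwm
  exact Xset_ne hstar (Ne.symm hmi) (h1 ▸ h2)

/-! #### The shape of induced paths in starlike graphs -/

lemma shape (hstar : IsStarlikePartition G t Vp) {a b : V} {p : G.Walk a b}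
    (hp : IsInducedPath G p) :
    (∀ w ∈ p.support, w = a ∨ w = b) ∨
    (∃ x, (∀ w ∈ p.support, w = a ∨ w = b ∨ w = x) ∧ a ≠ b ∧
      G.Adj a x ∧ G.Adj x b ∧ ¬ G.Adj a b) ∨
    (∃ x y, (∀ w ∈ p.support, w = a ∨ w = b ∨ w = x ∨ w = y) ∧
      x ∈ Vp 0 ∧ y ∈ Vp 0 ∧ a ≠ b ∧ a ≠ y ∧ x ≠ b ∧
      G.Adj a x ∧ G.Adj x y ∧ G.Adj y b ∧ ¬ G.Adj a y ∧ ¬ G.Adj x b ∧ ¬ G.Adj a b) := by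
  have hga : p.getVert 0 = a := p.getVert_zero
  have hgb : p.getVert p.length = b := p.getVert_length
  have hint : ∀ k : ℕ, k + 2 ≤ p.length → p.getVert (k+1) ∈ Vp 0 := by
    intro k hk
    have h1 : G.Adj (p.getVert k) (p.getVert (k+1)) := p.adj_getVert_succ (by omega)
    have h2 : G.Adj (p.getVert (k+1)) (p.getVert (k+2)) := p.adj_getVert_succ (by omega)
    exact interior_mem_V0 hstar h1 h2
      (ip_nonadj hp k (k+2) (by omega) (by omega))
      (ip_ne hp k (k+2) (by omega) (by omega) (by omega))
  have hL4 : p.length ≤ 3 := by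
    by_contra h
    push_neg at h
    have h1 : p.getVert 1 ∈ Vp 0 := hint 0 (by omega)
    have h3 : p.getVert 3 ∈ Vp 0 := hint 2 (by omega)
    exact ip_nonadj hp 1 3 (by omega) (by omega)
      (hstar.cliques 0 h1 h3 (ip_ne hp 1 3 (by omega) (by omega) (by omega)))
  have hmem : ∀ w ∈ p.support, ∃ k, k ≤ p.length ∧ p.getVert k = w := by
    intro w hw
    obtain ⟨n, h1, h2⟩ := SimpleGraph.Walk.mem_support_iff_exists_getVert.1 hw
    exact ⟨n, h2, h1⟩
  have hcase : p.length = 0 ∨ p.length = 1 ∨ p.length = 2 ∨ p.length = 3 := by omega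
  rcases hcase with hL | hL | hL | hL
  · left
    intro w hw
    obtain ⟨k, hk, rfl⟩ := hmem w hw
    have hk0 : k = 0 := by omega
    subst hk0; exact Or.inl hga
  · left
    intro w hw
    obtain ⟨k, hk, rfl⟩ := hmem w hw
    have : k = 0 ∨ k = 1 := by omega
    rcases this with rfl | rfl
    · exact Or.inl hga
    · right; have h := hgb; rwa [hL] at h
  · right; left
    have hb2 : p.getVert 2 = b := by have h := hgb; rwa [hL] at h
    refine ⟨p.getVert 1, ?_, ?_, ?_, ?_, ?_⟩
    · intro w hw
      obtain ⟨k, hk, rfl⟩ := hmem w hw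
      have : k = 0 ∨ k = 1 ∨ k = 2 := by omega
      rcases this with rfl | rfl | rfl
      · exact Or.inl hga
      · exact Or.inr (Or.inr rfl)
      · exact Or.inr (Or.inl hb2)
    · have h := ip_ne hp 0 2 (by omega) (by omega) (by omega)
      rwa [hga, hb2] at h
    · have h : G.Adj (p.getVert 0) (p.getVert 1) := p.adj_getVert_succ (by omega)
      rwa [hga] at h
    · have h : G.Adj (p.getVert 1) (p.getVert 2) := p.adj_getVert_succ (by omega)
      rwa [hb2] at h
    · have h := ip_nonadj hp 0 2 (by omega) (by omega)
      rwa [hga, hb2] at h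
  · right; right
    have hb3 : p.getVert 3 = b := by have h := hgb; rwa [hL] at h
    refine ⟨p.getVert 1, p.getVert 2, ?_, ?_, ?_, ?_, ?_, ?_, ?_, ?_, ?_, ?_, ?_, ?_⟩
    · intro w hw
      obtain ⟨k, hk, rfl⟩ := hmem w hw
      have : k = 0 ∨ k = 1 ∨ k = 2 ∨ k = 3 := by omega
      rcases this with rfl | rfl | rfl | rfl
      · exact Or.inl hga
      · exact Or.inr (Or.inr (Or.inl rfl))
      · exact Or.inr (Or.inr (Or.inr rfl))
      · exact Or.inr (Or.inl hb3)
    · exact hint 0 (by omega)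
    · exact hint 1 (by omega)
    · have h := ip_ne hp 0 3 (by omega) (by omega) (by omega)
      rwa [hga, hb3] at h
    · have h := ip_ne hp 0 2 (by omega) (by omega) (by omega)
      rwa [hga] at h
    · have h := ip_ne hp 1 3 (by omega) (by omega) (by omega)
      rwa [hb3] at h
    · have h : G.Adj (p.getVert 0) (p.getVert 1) := p.adj_getVert_succ (by omega)
      rwa [hga] at h
    · exact (p.adj_getVert_succ (by omega : (1:ℕ) < p.length) : G.Adj (p.getVert 1) (p.getVert 2))
    · have h : G.Adj (p.getVert 2) (p.getVert 3) := p.adj_getVert_succ (by omega)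
      rwa [hb3] at h
    · have h := ip_nonadj hp 0 2 (by omega) (by omega)
      rwa [hga] at h
    · have h := ip_nonadj hp 1 3 (by omega) (by omega)
      rwa [hb3] at h
    · have h := ip_nonadj hp 0 3 (by omega) (by omega)
      rwa [hga, hb3] at h

/-! #### Convexity lemmas -/

lemma convex_nonsimplicial_union (hstar : IsStarlikePartition G t Vp) (Q : Set V) :
    MonoConvex G (Q ∪ {u | ¬ IsSimplicial G u}) := by
  intro a b ha hb p hp w hw
  rcases shape hstar hp with h | ⟨x, hx, hne, hax, hxb, hab⟩ |
    ⟨x, y, hxy, _, _, _, hney, hnex, haxA, hxyA, hybA, hayN, hxbN, _⟩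
  · rcases h w hw with rfl | rfl
    exacts [ha, hb]
  · rcases hx w hw with rfl | rfl | rfl
    · exact ha
    · exact hb
    · exact Or.inr (not_simplicial_cherry hax.symm hxb hab hne)
  · rcases hxy w hw with rfl | rfl | rfl | rfl
    · exact ha
    · exact hb
    · exact Or.inr (not_simplicial_cherry haxA.symm hxyA hayN hney)
    · exact Or.inr (not_simplicial_cherry hxyA.symm hybA hxbN hnex)

lemma endpoint_class (hstar : IsStarlikePartition G t Vp) {i : Fin (t+1)} {Tv : Set V}
    (hTvY : Tv ⊆ Yset G Vp i) {v e : V}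
    (he : e ∈ Tv ∪ Cset G Vp i ∪ (Cset' G Vp i \ {v})) (he0 : e ∉ Vp 0) :
    (e ∈ Tv ∨ e ∈ Cset G Vp i) ∧
      ∃ m, e ∈ Cset G Vp m ∧ Cset' G Vp m ⊆ Cset' G Vp i := by
  rcases he with (heT | heC) | heC'
  · obtain ⟨m, ⟨_, hsub⟩, hem⟩ := mem_Yset_iff.1 (hTvY heT)
    exact ⟨Or.inl heT, m, hem, hsub⟩
  · exact ⟨Or.inr heC, i, heC, subset_rfl⟩
  · exact absurd (Cset'_subset_V0 hstar i heC'.1) he0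

lemma interior_mem_C' (hstar : IsStarlikePartition G t Vp) {i : Fin (t+1)} {Tv : Set V}
    (hTvY : Tv ⊆ Yset G Vp i) {v a x : V}
    (ha : a ∈ Tv ∪ Cset G Vp i ∪ (Cset' G Vp i \ {v})) (ha0 : a ∉ Vp 0)
    (hax : G.Adj a x) (hxZ : ¬ IsSimplicial G x) : x ∈ Cset' G Vp i := by
  obtain ⟨_, m, ham, hsub⟩ := endpoint_class hstar hTvY ha ha0
  exact hsub (mem_Cset'_of_adj hstar ham hax hxZ)

lemma interior_ne_v (hstar : IsStarlikePartition G t Vp) {i : Fin (t+1)} {Tv : Set V}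
    (hTvY : Tv ⊆ Yset G Vp i) {v : V} (hvN : v ∉ nbhdSet G Tv) {a x z : V}
    (ha : a ∈ Tv ∪ Cset G Vp i ∪ (Cset' G Vp i \ {v})) (ha0 : a ∉ Vp 0)
    (hax : G.Adj a x) (hz : z ∈ Cset' G Vp i) (hnaz : ¬ G.Adj a z) (hnez : a ≠ z) :
    x ≠ v := by
  intro hxv
  subst hxv
  obtain ⟨haTC, _⟩ := endpoint_class hstar hTvY ha ha0
  rcases haTC with haT | haC
  · exact hvN (mem_nbhdSet.2 ⟨a, haT, hax⟩)
  · have hXa : closedNbhd G a = Xset G Vp i := closedNbhd_eq_Xset hstar haC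
    have hzX : z ∈ closedNbhd G a := by rw [hXa]; exact hz.1
    rcases mem_closedNbhd.1 hzX with h | h
    · exact hnez h.symm
    · exact hnaz h

lemma case2_aux (hstar : IsStarlikePartition G t Vp) {i : Fin (t+1)} {Tv : Set V}
    (hTvY : Tv ⊆ Yset G Vp i) {v : V} (hvN : v ∉ nbhdSet G Tv) {a b x : V}
    (ha : a ∈ Tv ∪ Cset G Vp i ∪ (Cset' G Vp i \ {v}))
    (hb : b ∈ Tv ∪ Cset G Vp i ∪ (Cset' G Vp i \ {v}))
    (ha0 : a ∉ Vp 0) (hax : G.Adj a x) (hxb : G.Adj x b) (hnab : ¬ G.Adj a b)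
    (hne : a ≠ b) : x ∈ Cset' G Vp i \ {v} := by
  have hxZ : ¬ IsSimplicial G x := not_simplicial_cherry hax.symm hxb hnab hne
  refine ⟨interior_mem_C' hstar hTvY ha ha0 hax hxZ, ?_⟩
  intro hxv
  rw [Set.mem_singleton_iff] at hxv
  subst hxv
  obtain ⟨haTC, _⟩ := endpoint_class hstar hTvY ha ha0
  rcases haTC with haT | haC
  · exact hvN (mem_nbhdSet.2 ⟨a, haT, hax⟩)
  · have hXa : closedNbhd G a = Xset G Vp i := closedNbhd_eq_Xset hstar haC
    have hbX : b ∈ Xset G Vp i := by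
      rcases hb with (hbT | hbC) | hbC'
      · exact absurd (mem_nbhdSet.2 ⟨b, hbT, hxb.symm⟩) hvN
      · exact hbC.1
      · exact hbC'.1.1
    rw [← hXa] at hbX
    rcases mem_closedNbhd.1 hbX with h | h
    · exact hne h.symm
    · exact hnab h

lemma convexK2 (hstar : IsStarlikePartition G t Vp) (i : Fin (t+1)) (Tv : Set V)
    (hTvY : Tv ⊆ Yset G Vp i) {v : V} (hv : v ∈ Cset' G Vp i)
    (hvN : v ∉ nbhdSet G Tv) :
    MonoConvex G (Tv ∪ Cset G Vp i ∪ (Cset' G Vp i \ {v})) := by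
  intro a b ha hb p hp w hw
  rcases shape hstar hp with h | ⟨x, hx, hne, hax, hxb, hab⟩ |
    ⟨x, y, hxy, hx0, hy0, hne, hney, hnex, haxA, hxyA, hybA, hayN, hxbN, habN⟩
  · rcases h w hw with rfl | rfl
    exacts [ha, hb]
  · rcases hx w hw with rfl | rfl | rfl
    · exact ha
    · exact hb
    · right
      by_cases ha0 : a ∈ Vp 0
      · have hb0 : b ∉ Vp 0 := by
          intro hb0
          exact hab (hstar.cliques 0 ha0 hb0 hne)
        exact case2_aux hstar hTvY hvN hb ha hb0 hxb.symm hax.symm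
          (fun h => hab h.symm) (Ne.symm hne)
      · exact case2_aux hstar hTvY hvN ha hb ha0 hax hxb hab hne
  · rcases hxy w hw with rfl | rfl | rfl | rfl
    · exact ha
    · exact hb
    · right
      have ha0 : a ∉ Vp 0 := fun h => hayN (hstar.cliques 0 h hy0 hney)
      have hxC' : w ∈ Cset' G Vp i :=
        interior_mem_C' hstar hTvY ha ha0 haxA
          (not_simplicial_cherry haxA.symm hxyA hayN hney)
      have hb0 : b ∉ Vp 0 := fun h => hxbN (hstar.cliques 0 hx0 h hnex)
      have hyC' : y ∈ Cset' G Vp i :=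
        interior_mem_C' hstar hTvY hb hb0 hybA.symm
          (not_simplicial_cherry hxyA.symm hybA hxbN hnex)
      refine ⟨hxC', ?_⟩
      simpa using interior_ne_v hstar hTvY hvN ha ha0 haxA hyC' hayN hney
    · right
      have ha0 : a ∉ Vp 0 := fun h => hayN (hstar.cliques 0 h hy0 hney)
      have hxC' : x ∈ Cset' G Vp i :=
        interior_mem_C' hstar hTvY ha ha0 haxA
          (not_simplicial_cherry haxA.symm hxyA hayN hney)
      have hb0 : b ∉ Vp 0 := fun h => hxbN (hstar.cliques 0 hx0 h hnex)
      have hyC' : w ∈ Cset' G Vp i :=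
        interior_mem_C' hstar hTvY hb hb0 hybA.symm
          (not_simplicial_cherry hxyA.symm hybA hxbN hnex)
      refine ⟨hyC', ?_⟩
      simpa using interior_ne_v hstar hTvY hvN hb hb0 hybA.symm hxC'
        (fun h => hxbN h.symm) (Ne.symm hnex)

end StarlikeAux
open StarlikeAux in
/-- if `T_i` is a critical independent set of `G_i` contained in `Y_i`,
then `S_i = (C'_i − N(T_i)) ∪ T_i ∪ C_i` is m-convexly independent,
`|S_i| = |X_i| + d_c(G_i)`, and hence `r(G) ≥ |X_i| + d_c(G_i)`. -/
theorem statement4 [Fintype V] (G : SimpleGraph V) (t : ℕ) (Vp : Fin (t+1) → Set V)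
    (hstar : IsStarlikePartition G t Vp) (i : Fin (t+1))
    (T : Set ↥(Wset G Vp i))
    (hTindep : IsIndepSet' (Gsplit G Vp i) T)
    (hTcrit : indepDiff (Gsplit G Vp i) T = critIndepDiff (Gsplit G Vp i))
    (hTY : Subtype.val '' T ⊆ Yset G Vp i) :
    MConvexIndep G
      ((Cset' G Vp i \ nbhdSet G (Subtype.val '' T)) ∪ Subtype.val '' T ∪ Cset G Vp i) ∧
    ((((Cset' G Vp i \ nbhdSet G (Subtype.val '' T)) ∪ Subtype.val '' T ∪
        Cset G Vp i).ncard : ℤ)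
      = ((Xset G Vp i).ncard : ℤ) + critIndepDiff (Gsplit G Vp i)) ∧
    ((Xset G Vp i).ncard : ℤ) + critIndepDiff (Gsplit G Vp i) ≤ (monoRank G : ℤ) := by
  classical
  set Tv : Set V := Subtype.val '' T with hTvdef
  set A : Set V := Cset' G Vp i \ nbhdSet G Tv with hAdef
  set Cc : Set V := Cset G Vp i with hCcdef
  set S : Set V := A ∪ Tv ∪ Cc with hSdef
  have hTvY : Tv ⊆ Yset G Vp i := hTY
  have hTvZ : ∀ x ∈ Tv, IsSimplicial G x := fun x hx => Yset_subset_simplicial (hTvY hx)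
  have hCZ : ∀ x ∈ Cc, IsSimplicial G x := fun x hx => hx.2
  have hC'Z : ∀ x ∈ Cset' G Vp i, ¬ IsSimplicial G x := fun x hx h => hx.2 ⟨hx.1, h⟩
  have hCY : ∀ x ∈ Cc, x ∉ Yset G Vp i := Cset_disjoint_Yset hstar i
  -- Part 1 : m-convex independence
  have part1 : MConvexIndep G S := by
    intro v hv hmem
    by_cases hvs : IsSimplicial G v
    · have hconv := convex_nonsimplicial_union hstar (Q := S \ {v})
      have hvK := (Set.mem_sInter.1 hmem) _ ⟨Set.subset_union_left, hconv⟩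
      rcases hvK with h | h
      · exact h.2 rfl
      · exact h hvs
    · have hvA : v ∈ Cset' G Vp i \ nbhdSet G Tv := by
        rcases hv with (h | h) | h
        · exact h
        · exact absurd (hTvZ v h) hvs
        · exact absurd (hCZ v h) hvs
      have hconv := convexK2 hstar i Tv hTvY hvA.1 hvA.2
      have hsub : S \ {v} ⊆ Tv ∪ Cset G Vp i ∪ (Cset' G Vp i \ {v}) := by
        rintro u ⟨hu, hune⟩
        rcases hu with (h | h) | h
        · exact Or.inr ⟨h.1, hune⟩
        · exact Or.inl (Or.inl h)
        · exact Or.inl (Or.inr h)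
      have hvK := (Set.mem_sInter.1 hmem) _ ⟨hsub, hconv⟩
      rcases hvK with (h | h) | h
      · exact hvs (hTvZ v h)
      · exact hvs (hCZ v h)
      · exact h.2 rfl
  -- Part 2 : cardinality
  have hWdiff : Wset G Vp i \ Yset G Vp i ⊆ Cset' G Vp i := by
    intro w hw
    obtain ⟨hw1, hw2⟩ := hw
    unfold Wset at hw1
    split_ifs at hw1 with hcond
    · rcases hw1 with h | h
      · exact h.1
      · exact absurd h hw2
    · rcases hw1 with h | h
      · exact h
      · exact absurd h hw2
  have hsubW : ∀ w ∈ Cset' G Vp i, w ∈ nbhdSet G (Yset G Vp i) → w ∈ Wset G Vp i := by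
    intro w h1 h2
    unfold Wset
    split_ifs with hcond
    · exact Or.inl ⟨h1, h2⟩
    · exact Or.inl h1
  have key : Subtype.val '' (nbhdSet (Gsplit G Vp i) T) = Cset' G Vp i ∩ nbhdSet G Tv := by
    ext w
    constructor
    · rintro ⟨u, hu, rfl⟩
      obtain ⟨s, hsT, hadj⟩ := mem_nbhdSet.1 hu
      have hadj' : G.Adj (s : V) (u : V) ∧ ¬((s : V) ∈ Yset G Vp i ∧ (u : V) ∈ Yset G Vp i) :=
        hadj
      obtain ⟨h1, h2⟩ := hadj'
      have hsY : (s : V) ∈ Yset G Vp i := hTvY ⟨s, hsT, rfl⟩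
      have huY : (u : V) ∉ Yset G Vp i := fun h => h2 ⟨hsY, h⟩
      exact ⟨hWdiff ⟨u.2, huY⟩, mem_nbhdSet.2 ⟨(s : V), ⟨s, hsT, rfl⟩, h1⟩⟩
    · rintro ⟨hwC, hwN⟩
      obtain ⟨sv, hsv, hadj⟩ := mem_nbhdSet.1 hwN
      obtain ⟨s, hsT, rfl⟩ := hsv
      have hsY : (s : V) ∈ Yset G Vp i := hTvY ⟨s, hsT, rfl⟩
      have hwW : w ∈ Wset G Vp i := hsubW w hwC (mem_nbhdSet.2 ⟨_, hsY, hadj⟩)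
      have hwY : w ∉ Yset G Vp i := fun h => hC'Z w hwC (Yset_subset_simplicial h)
      refine ⟨⟨w, hwW⟩, mem_nbhdSet.2 ⟨s, hsT, ?_⟩, rfl⟩
      exact (⟨hadj, fun hc => hwY hc.2⟩ :
        G.Adj (s : V) w ∧ ¬((s : V) ∈ Yset G Vp i ∧ w ∈ Yset G Vp i))
  have hTvcard : Tv.ncard = T.ncard := Set.ncard_image_of_injective T Subtype.val_injective
  have hNcard : (Cset' G Vp i ∩ nbhdSet G Tv).ncard = (nbhdSet (Gsplit G Vp i) T).ncard := by
    rw [← key]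
    exact Set.ncard_image_of_injective _ Subtype.val_injective
  have hdisj1 : Disjoint A Tv := by
    rw [Set.disjoint_left]
    intro x hx hx2
    exact hC'Z x hx.1 (hTvZ x hx2)
  have hdisj2 : Disjoint (A ∪ Tv) Cc := by
    rw [Set.disjoint_left]
    rintro x (hx | hx) hx2
    · exact hx.1.2 hx2
    · exact hCY x hx2 (hTvY hx)
  have hScard : S.ncard = A.ncard + Tv.ncard + Cc.ncard := by
    rw [hSdef, Set.ncard_union_eq hdisj2, Set.ncard_union_eq hdisj1]
  have hC'split : (Cset' G Vp i).ncard = A.ncard + (Cset' G Vp i ∩ nbhdSet G Tv).ncard := by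
    have hdecomp : Cset' G Vp i = A ∪ (Cset' G Vp i ∩ nbhdSet G Tv) := by
      ext x
      constructor
      · intro hx
        by_cases hxn : x ∈ nbhdSet G Tv
        · exact Or.inr ⟨hx, hxn⟩
        · exact Or.inl ⟨hx, hxn⟩
      · rintro (hx | hx)
        exacts [hx.1, hx.1]
    have hd : Disjoint A (Cset' G Vp i ∩ nbhdSet G Tv) := by
      rw [Set.disjoint_left]
      intro x hx hx2
      exact hx.2 hx2.2
    conv_lhs => rw [hdecomp]
    rw [Set.ncard_union_eq hd]
  have hXcard : (Xset G Vp i).ncard = Cc.ncard + (Cset' G Vp i).ncard := by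
    have h1 : Xset G Vp i = Cc ∪ Cset' G Vp i :=
      (Set.union_diff_cancel (Set.inter_subset_left)).symm
    have hd : Disjoint Cc (Cset' G Vp i) :=
      Set.disjoint_left.2 (fun x hx hx2 => hx2.2 hx)
    rw [h1, Set.ncard_union_eq hd]
  have part2 : (S.ncard : ℤ) = ((Xset G Vp i).ncard : ℤ) + critIndepDiff (Gsplit G Vp i) := by
    rw [← hTcrit]
    unfold indepDiff
    omega
  -- Part 3 : rank bound
  have hmemS : S.ncard ∈ {n : ℕ | ∃ S' : Set V, MConvexIndep G S' ∧ n = S'.ncard} :=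
    ⟨S, part1, rfl⟩
  have hbdd : BddAbove {n : ℕ | ∃ S' : Set V, MConvexIndep G S' ∧ n = S'.ncard} := by
    refine ⟨Nat.card V, ?_⟩
    rintro n ⟨S', _, rfl⟩
    calc S'.ncard ≤ (Set.univ : Set V).ncard :=
          Set.ncard_le_ncard (Set.subset_univ _) (Set.toFinite _)
      _ = Nat.card V := Set.ncard_univ V
  have hrank : S.ncard ≤ monoRank G := le_csSup hbdd hmemS
  refine ⟨part1, part2, ?_⟩
  rw [← part2]
  exact_mod_cast hrank
end

section
/- Let G be a starlike graph with clique partition (V_0, V_1, …, V_t) and let S be an m-convexly independent set of G such that no vertex of S ∩ C'_0 is adjacent to a vertex of S ∩ Z. Then |S| ≤ |X_0| + d_c(G_0). -/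
open SimpleGraph

variable {V : Type*}

/-- In a starlike partition, every vertex outside `V₀` is simplicial. -/
lemma simplicial_of_not_mem_base {G : SimpleGraph V} {t : ℕ} {Vp : Fin (t+1) → Set V}
    (hstar : IsStarlikePartition G t Vp) {i : Fin (t+1)} (hi : i ≠ 0) {v : V}
    (hv : v ∈ Vp i) : IsSimplicial G v := by
  intro a ha b hb hab
  have hmem : ∀ x ∈ closedNbhd G v, x ∉ Vp i → x ∈ Vp 0 := fun x hx hxn =>
    hstar.nbhd_sub i hi v hv ⟨hx, hxn⟩
  by_cases haV : a ∈ Vp i <;> by_cases hbV : b ∈ Vp i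
  · exact hstar.cliques i haV hbV hab
  · have : b ∈ closedNbhd G a \ Vp i := by
      rw [← hstar.nbhd_eq i hi v hv a haV]; exact ⟨hb, hbV⟩
    rcases this.1 with h1 | h1
    · exact absurd h1.symm hab
    · exact h1
  · have : a ∈ closedNbhd G b \ Vp i := by
      rw [← hstar.nbhd_eq i hi v hv b hbV]; exact ⟨ha, haV⟩
    rcases this.1 with h1 | h1
    · exact absurd h1 hab
    · exact h1.symm
  · exact hstar.cliques 0 (hmem a ha haV) (hmem b hb hbV) hab

lemma Xset_zero (G : SimpleGraph V) {t : ℕ} (Vp : Fin (t+1) → Set V) :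
    Xset G Vp 0 = Vp 0 := by simp [Xset]

lemma Cset'_subset_base {G : SimpleGraph V} {t : ℕ} {Vp : Fin (t+1) → Set V}
    (hstar : IsStarlikePartition G t Vp) {j : Fin (t+1)} (hj : j ≠ 0) :
    Cset' G Vp j ⊆ Cset' G Vp 0 := by
  rintro w ⟨hwX, hwC⟩
  have hwZ : w ∉ simplicialSet G := fun hz => hwC ⟨hwX, hz⟩
  have hwX' : w ∈ ⋃ u ∈ Vp j, closedNbhd G u := by
    rwa [Xset, if_neg hj] at hwX
  rcases Set.mem_iUnion₂.1 hwX' with ⟨u, hu, hwu⟩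
  have hwj : w ∉ Vp j := fun hwj => hwZ (simplicial_of_not_mem_base hstar hj hwj)
  have hw0 : w ∈ Vp 0 := hstar.nbhd_sub j hj u hu ⟨hwu, hwj⟩
  refine ⟨by rwa [Xset_zero], fun hc => hwZ hc.2⟩

lemma sdiff_base_subset_Yset {G : SimpleGraph V} {t : ℕ} {Vp : Fin (t+1) → Set V}
    (hstar : IsStarlikePartition G t Vp) {v : V} (hv : v ∉ Vp 0) :
    v ∈ Yset G Vp 0 := by
  rcases hstar.covers v with ⟨j, hj⟩
  have hj0 : j ≠ 0 := fun h => hv (h ▸ hj)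
  have hvZ : v ∈ simplicialSet G := simplicial_of_not_mem_base hstar hj0 hj
  have hvX : v ∈ Xset G Vp j := by
    rw [Xset, if_neg hj0]
    exact Set.mem_iUnion₂.2 ⟨v, hj, Set.mem_insert v _⟩
  exact Set.mem_iUnion₂.2 ⟨j, ⟨hj0, Cset'_subset_base hstar hj0⟩, hvX, hvZ⟩

lemma Yset_subset_Wset (G : SimpleGraph V) {t : ℕ} (Vp : Fin (t+1) → Set V)
    (i : Fin (t+1)) : Yset G Vp i ⊆ Wset G Vp i := by
  rw [Wset]
  split_ifs <;> exact Set.subset_union_right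

lemma Wset_subset (G : SimpleGraph V) {t : ℕ} (Vp : Fin (t+1) → Set V)
    (i : Fin (t+1)) : Wset G Vp i ⊆ Cset' G Vp i ∪ Yset G Vp i := by
  rw [Wset]
  split_ifs
  · exact Set.union_subset_union_left _ Set.inter_subset_left
  · exact subset_rfl

/-- if `S` is m-convexly independent in a starlike graph and no vertex of
`S ∩ C'_0` is adjacent to a vertex of `S ∩ Z`, then `|S| ≤ |X_0| + d_c(G_0)`. -/
theorem statement14 [Fintype V] (G : SimpleGraph V) (t : ℕ) (Vp : Fin (t+1) → Set V)
    (hstar : IsStarlikePartition G t Vp) (S : Set V) (hS : MConvexIndep G S)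
    (h : ∀ u ∈ S ∩ Cset' G Vp 0, ∀ v ∈ S ∩ simplicialSet G, ¬ G.Adj u v) :
    (S.ncard : ℤ) ≤ ((Xset G Vp 0).ncard : ℤ) + critIndepDiff (Gsplit G Vp 0) := by
  classical
  set W := Wset G Vp 0 with hW
  set Y := Yset G Vp 0 with hY
  set Gs := Gsplit G Vp 0 with hGs
  -- the candidate independent set in the split graph
  set T : Set ↥W := Subtype.val ⁻¹' (S \ Vp 0) with hT
  have hSY : S \ Vp 0 ⊆ Y := fun v hv => sdiff_base_subset_Yset hstar hv.2
  have hSW : S \ Vp 0 ⊆ W := fun v hv => Yset_subset_Wset G Vp 0 (hSY hv)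
  have hTY : ∀ w : ↥W, w ∈ T → (w : V) ∈ Y := fun w hw => hSY hw
  -- T is independent in the split graph
  have hindep : IsIndepSet' Gs T := by
    intro u hu v hv hadj
    exact hadj.2 ⟨hTY u hu, hTY v hv⟩
  -- |T| = |S \ V₀|
  have himgT : Subtype.val '' T = S \ Vp 0 := by
    rw [hT, Subtype.image_preimage_coe]
    exact Set.inter_eq_right.2 hSW
  have hcardT : T.ncard = (S \ Vp 0).ncard := by
    rw [← himgT, Set.ncard_image_of_injective _ Subtype.val_injective]
  -- the neighborhood of T lives in V₀ \ S
  have hNsub : Subtype.val '' (nbhdSet Gs T) ⊆ Vp 0 \ S := by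
    rintro _ ⟨w, hw, rfl⟩
    rcases Set.mem_iUnion₂.1 hw with ⟨u, hu, hadj⟩
    have hadj' : Gs.Adj u w := hadj
    have huS : (u : V) ∈ S \ Vp 0 := hu
    have huY : (u : V) ∈ Y := hSY huS
    have hwY : (w : V) ∉ Y := fun hwY => hadj'.2 ⟨huY, hwY⟩
    have hwC : (w : V) ∈ Cset' G Vp 0 := by
      rcases Wset_subset G Vp 0 w.2 with h1 | h1
      · exact h1
      · exact absurd h1 hwY
    have hw0 : (w : V) ∈ Vp 0 := by
      have := hwC.1; rwa [Xset_zero] at this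
    have huZ : (u : V) ∈ simplicialSet G := by
      rcases hstar.covers (u : V) with ⟨j, hj⟩
      have hj0 : j ≠ 0 := fun hc => huS.2 (hc ▸ hj)
      exact simplicial_of_not_mem_base hstar hj0 hj
    refine ⟨hw0, fun hwS => ?_⟩
    exact h (w : V) ⟨hwS, hwC⟩ (u : V) ⟨huS.1, huZ⟩ hadj'.1.symm
  have hcardN : ((nbhdSet Gs T).ncard : ℤ) ≤ ((Vp 0 \ S).ncard : ℤ) := by
    have : (Subtype.val '' (nbhdSet Gs T)).ncard ≤ (Vp 0 \ S).ncard :=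
      Set.ncard_le_ncard hNsub (Set.toFinite _)
    rw [Set.ncard_image_of_injective _ Subtype.val_injective] at this
    exact_mod_cast this
  -- d(T) bounds
  have hdT : ((S \ Vp 0).ncard : ℤ) - ((Vp 0 \ S).ncard : ℤ) ≤ indepDiff Gs T := by
    rw [indepDiff, hcardT]
    linarith
  -- d(T) ≤ d_c(G₀)
  have hbdd : BddAbove {d : ℤ | ∃ T' : Set ↥W, IsIndepSet' Gs T' ∧ d = indepDiff Gs T'} := by
    refine ⟨((Set.univ : Set ↥W).ncard : ℤ), ?_⟩
    rintro d ⟨T', _, rfl⟩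
    have h1 : (T'.ncard : ℤ) ≤ ((Set.univ : Set ↥W).ncard : ℤ) := by
      exact_mod_cast Set.ncard_le_ncard (Set.subset_univ T') (Set.toFinite _)
    have h2 : (0 : ℤ) ≤ ((nbhdSet Gs T').ncard : ℤ) := Int.natCast_nonneg _
    rw [indepDiff]; linarith
  have hdc : indepDiff Gs T ≤ critIndepDiff Gs :=
    le_csSup hbdd ⟨T, hindep, rfl⟩
  -- counting
  have hS1 : (S ∩ Vp 0).ncard + (S \ Vp 0).ncard = S.ncard :=
    Set.ncard_inter_add_ncard_diff_eq_ncard S (Vp 0) (Set.toFinite S)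
  have hS2 : (Vp 0 ∩ S).ncard + (Vp 0 \ S).ncard = (Vp 0).ncard :=
    Set.ncard_inter_add_ncard_diff_eq_ncard (Vp 0) S (Set.toFinite _)
  have hcomm : (S ∩ Vp 0).ncard = (Vp 0 ∩ S).ncard := by rw [Set.inter_comm]
  rw [Xset_zero]
  have e1 : (S.ncard : ℤ) = ((S ∩ Vp 0).ncard : ℤ) + ((S \ Vp 0).ncard : ℤ) := by
    exact_mod_cast hS1.symm
  have e2 : ((Vp 0).ncard : ℤ) = ((Vp 0 ∩ S).ncard : ℤ) + ((Vp 0 \ S).ncard : ℤ) := by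
    exact_mod_cast hS2.symm
  have e3 : ((S ∩ Vp 0).ncard : ℤ) = ((Vp 0 ∩ S).ncard : ℤ) := by exact_mod_cast hcomm
  linarith
end
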